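/- arXiv:math/0109005 — 2 statements merged into one kernel-verified Lean document; each statement's English description precedes it below -/
import Mathlib

section
/- Assume the transformation laws θ(t/τ, -1/τ) = (1/i)√(τ/i) e^{πit²/τ} θ(t,τ) and θ(t,τ+1) = e^{πi/4} θ(t,τ), plus the analogous laws for the derivative θ'(0,·). Then for A = [[a,b],[c,d]] ∈ SL₂(ℤ), θ'(A(0,τ))/θ(A(t,τ)) = (cτ+d) e^{-πict²/(cτ+d)} · θ'(0,τ)/θ(t,τ), where θ'(A(0,τ)) means θ'(0, (aτ+b)/(cτ+d)). -/
open Complex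

/-- `c(q) = ∏_{k≥1} (1 - q^k)`. -/
noncomputable def jacobiCFactor (q : ℂ) : ℂ := ∏' k : ℕ, (1 - q ^ (k + 1))

/-- The Jacobi theta function
`θ(t,τ) = c(q) q^{1/8} · 2 sin(πt) · ∏_{k≥1}(1 - q^k e^{2πit})(1 - q^k e^{-2πit})`,
with `q = e^{2πiτ}` and `q^{1/8} = e^{πiτ/4}`. -/
noncomputable def jTheta (t τ : ℂ) : ℂ :=
  jacobiCFactor (exp (2 * Real.pi * I * τ)) * exp (Real.pi * I * τ / 4) *
    (2 * sin (Real.pi * t)) *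
    ∏' k : ℕ,
      ((1 - exp (2 * Real.pi * I * τ) ^ (k + 1) * exp (2 * Real.pi * I * t)) *
        (1 - exp (2 * Real.pi * I * τ) ^ (k + 1) * exp (-(2 * Real.pi * I * t))))

/-- The action of `A = [[a,b],[c,d]] ∈ SL₂(ℤ)` on `(t,τ) ∈ ℂ × H` by
`A(t,τ) = (t/(cτ+d), (aτ+b)/(cτ+d))`. -/
noncomputable def sl2Act (A : Matrix.SpecialLinearGroup (Fin 2) ℤ) (p : ℂ × ℂ) : ℂ × ℂ :=
  (p.1 / ((A.1 1 0 : ℂ) * p.2 + (A.1 1 1 : ℂ)),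
    ((A.1 0 0 : ℂ) * p.2 + (A.1 0 1 : ℂ)) / ((A.1 1 0 : ℂ) * p.2 + (A.1 1 1 : ℂ)))

/-- `θ'(0,τ)`, the `t`-derivative of the Jacobi theta function at `t = 0`. -/
noncomputable def jThetaDeriv (τ : ℂ) : ℂ := deriv (fun t : ℂ => jTheta t τ) 0


open Complex

noncomputable def jFac (A : Matrix.SpecialLinearGroup (Fin 2) ℤ) (t τ : ℂ) : ℂ :=
  ((A.1 1 0 : ℂ) * τ + (A.1 1 1 : ℂ))
    * exp (-(Real.pi * I) * (A.1 1 0 : ℂ) * t ^ 2 / ((A.1 1 0 : ℂ) * τ + (A.1 1 1 : ℂ)))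

lemma det_coe_complex (A : Matrix.SpecialLinearGroup (Fin 2) ℤ) :
    (A.1 0 0 : ℂ) * A.1 1 1 - (A.1 0 1 : ℂ) * A.1 1 0 = 1 := by
  have h := A.2
  rw [Matrix.det_fin_two] at h
  exact_mod_cast congrArg (fun n : ℤ => (n : ℂ)) h

lemma det_coe_real (A : Matrix.SpecialLinearGroup (Fin 2) ℤ) :
    (A.1 0 0 : ℝ) * A.1 1 1 - (A.1 0 1 : ℝ) * A.1 1 0 = 1 := by
  have h := A.2
  rw [Matrix.det_fin_two] at h
  exact_mod_cast congrArg (fun n : ℤ => (n : ℝ)) h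

lemma denom_ne_zero (A : Matrix.SpecialLinearGroup (Fin 2) ℤ) {τ : ℂ} (hτ : 0 < τ.im) :
    (A.1 1 0 : ℂ) * τ + (A.1 1 1 : ℂ) ≠ 0 := by
  intro H
  by_cases hc : (A.1 1 0 : ℤ) = 0
  · have hdet := A.2
    rw [Matrix.det_fin_two, hc] at hdet
    have hd : (A.1 1 1 : ℤ) ≠ 0 := by intro h0; rw [h0] at hdet; simp at hdet
    apply hd
    rw [hc] at H
    simpa using H
  · have him : ((A.1 1 0 : ℂ) * τ + (A.1 1 1 : ℂ)).im = (A.1 1 0 : ℝ) * τ.im := by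
      simp [Complex.add_im, Complex.mul_im]
    rw [H] at him
    have hc' : ((A.1 1 0 : ℤ) : ℝ) ≠ 0 := Int.cast_ne_zero.2 hc
    exact mul_ne_zero hc' hτ.ne' him.symm

lemma im_act_pos (A : Matrix.SpecialLinearGroup (Fin 2) ℤ) (t τ : ℂ) (hτ : 0 < τ.im) :
    0 < ((sl2Act A (t, τ)).2).im := by
  have hd := denom_ne_zero A hτ
  have hsq : 0 < Complex.normSq ((A.1 1 0 : ℂ) * τ + (A.1 1 1 : ℂ)) := normSq_pos.2 hd
  have key : ((A.1 0 0 : ℂ) * τ + (A.1 0 1 : ℂ)).im * ((A.1 1 0 : ℂ) * τ + (A.1 1 1 : ℂ)).re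
      - ((A.1 0 0 : ℂ) * τ + (A.1 0 1 : ℂ)).re * ((A.1 1 0 : ℂ) * τ + (A.1 1 1 : ℂ)).im
      = τ.im := by
    have hdet := det_coe_real A
    simp only [Complex.add_im, Complex.add_re, Complex.mul_im, Complex.mul_re,
      Complex.intCast_im, Complex.intCast_re]
    nlinarith [hdet]
  show 0 < (((A.1 0 0 : ℂ) * τ + (A.1 0 1 : ℂ)) / ((A.1 1 0 : ℂ) * τ + (A.1 1 1 : ℂ))).im
  rw [Complex.div_im, div_sub_div_same, key]
  exact div_pos hτ hsq
lemma mul_entry (A B : Matrix.SpecialLinearGroup (Fin 2) ℤ) (i j : Fin 2) :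
    (((A * B).1 i j : ℤ) : ℂ) = (A.1 i 0 : ℂ) * B.1 0 j + (A.1 i 1 : ℂ) * B.1 1 j := by
  rw [show (A * B).1 = A.1 * B.1 from rfl, Matrix.mul_apply, Fin.sum_univ_two]
  push_cast
  ring

lemma sl2Act_one (p : ℂ × ℂ) : sl2Act 1 p = p := by
  simp [sl2Act]

lemma sl2Act_mul (A B : Matrix.SpecialLinearGroup (Fin 2) ℤ) (t τ : ℂ) (hτ : 0 < τ.im) :
    sl2Act (A * B) (t, τ) = sl2Act A (sl2Act B (t, τ)) := by
  have hdB := denom_ne_zero B hτ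
  have hτ' := im_act_pos B t τ hτ
  have hdA : (A.1 1 0 : ℂ) * (sl2Act B (t, τ)).2 + (A.1 1 1 : ℂ) ≠ 0 := denom_ne_zero A hτ'
  have hkey : ((A.1 1 0 : ℂ) * (sl2Act B (t, τ)).2 + (A.1 1 1 : ℂ))
        * ((B.1 1 0 : ℂ) * τ + (B.1 1 1 : ℂ))
      = ((A * B).1 1 0 : ℂ) * τ + ((A * B).1 1 1 : ℂ) := by
    rw [mul_entry A B 1 0, mul_entry A B 1 1]
    show ((A.1 1 0 : ℂ) * (((B.1 0 0 : ℂ) * τ + (B.1 0 1 : ℂ)) / ((B.1 1 0 : ℂ) * τ + (B.1 1 1 : ℂ))) + (A.1 1 1 : ℂ)) * _ = _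
    rw [add_mul, mul_assoc, div_mul_cancel₀ _ hdB]
    ring
  have hkeyN : ((A.1 0 0 : ℂ) * (sl2Act B (t, τ)).2 + (A.1 0 1 : ℂ))
        * ((B.1 1 0 : ℂ) * τ + (B.1 1 1 : ℂ))
      = ((A * B).1 0 0 : ℂ) * τ + ((A * B).1 0 1 : ℂ) := by
    rw [mul_entry A B 0 0, mul_entry A B 0 1]
    show ((A.1 0 0 : ℂ) * (((B.1 0 0 : ℂ) * τ + (B.1 0 1 : ℂ)) / ((B.1 1 0 : ℂ) * τ + (B.1 1 1 : ℂ))) + (A.1 0 1 : ℂ)) * _ = _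
    rw [add_mul, mul_assoc, div_mul_cancel₀ _ hdB]
    ring
  have hdAB : ((A * B).1 1 0 : ℂ) * τ + ((A * B).1 1 1 : ℂ) ≠ 0 := denom_ne_zero (A * B) hτ
  refine Prod.ext ?_ ?_
  · show t / (((A * B).1 1 0 : ℂ) * τ + ((A * B).1 1 1 : ℂ))
      = (t / ((B.1 1 0 : ℂ) * τ + (B.1 1 1 : ℂ))) / ((A.1 1 0 : ℂ) * (sl2Act B (t, τ)).2 + (A.1 1 1 : ℂ))
    rw [div_div, ← hkey, mul_comm]
  · show (((A * B).1 0 0 : ℂ) * τ + ((A * B).1 0 1 : ℂ)) / (((A * B).1 1 0 : ℂ) * τ + ((A * B).1 1 1 : ℂ))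
      = ((A.1 0 0 : ℂ) * (sl2Act B (t, τ)).2 + (A.1 0 1 : ℂ)) / ((A.1 1 0 : ℂ) * (sl2Act B (t, τ)).2 + (A.1 1 1 : ℂ))
    rw [← hkey, ← hkeyN, mul_div_mul_right _ _ hdB]

lemma jFac_one (t τ : ℂ) : jFac 1 t τ = 1 := by
  simp [jFac]

lemma jFac_ne_zero (A : Matrix.SpecialLinearGroup (Fin 2) ℤ) (t τ : ℂ) (hτ : 0 < τ.im) :
    jFac A t τ ≠ 0 :=
  mul_ne_zero (denom_ne_zero A hτ) (Complex.exp_ne_zero _)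

lemma exp_cocycle (cA dA aB bB cB dB t τ : ℂ)
    (hdB : cB * τ + dB ≠ 0)
    (hdAB : (cA * aB + dA * cB) * τ + (cA * bB + dA * dB) ≠ 0)
    (hdetB : aB * dB - bB * cB = 1) :
    -(Real.pi * I) * (cA * aB + dA * cB) * t ^ 2 / ((cA * aB + dA * cB) * τ + (cA * bB + dA * dB))
      = -(Real.pi * I) * cA * (t / (cB * τ + dB)) ^ 2
          / (cA * ((aB * τ + bB) / (cB * τ + dB)) + dA)
        + -(Real.pi * I) * cB * t ^ 2 / (cB * τ + dB) := by
  have e1 : cA * ((aB * τ + bB) / (cB * τ + dB)) + dA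
      = ((cA * aB + dA * cB) * τ + (cA * bB + dA * dB)) / (cB * τ + dB) := by
    rw [eq_div_iff hdB, add_mul, mul_assoc, div_mul_cancel₀ _ hdB]; ring
  have t1 : -(Real.pi * I) * cA * (t / (cB * τ + dB)) ^ 2
        / (((cA * aB + dA * cB) * τ + (cA * bB + dA * dB)) / (cB * τ + dB))
      = -(Real.pi * I) * cA * t ^ 2
        / ((cB * τ + dB) * ((cA * aB + dA * cB) * τ + (cA * bB + dA * dB))) := by
    rw [div_pow, div_div_eq_mul_div, div_eq_div_iff hdAB (mul_ne_zero hdB hdAB)]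
    field_simp
  rw [e1, t1, div_add_div _ _ (mul_ne_zero hdB hdAB) hdB,
    div_eq_div_iff hdAB (mul_ne_zero (mul_ne_zero hdB hdAB) hdB)]
  linear_combination (-(Real.pi * I) * t ^ 2 * (cB * τ + dB)
      * ((cA * aB + dA * cB) * τ + (cA * bB + dA * dB)) * cA) * hdetB

lemma jFac_mul (A B : Matrix.SpecialLinearGroup (Fin 2) ℤ) (t τ : ℂ) (hτ : 0 < τ.im) :
    jFac (A * B) t τ
      = jFac A (sl2Act B (t, τ)).1 (sl2Act B (t, τ)).2 * jFac B t τ := by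
  have hdB := denom_ne_zero B hτ
  have hτ' := im_act_pos B t τ hτ
  have hkey : ((A.1 1 0 : ℂ) * (sl2Act B (t, τ)).2 + (A.1 1 1 : ℂ))
        * ((B.1 1 0 : ℂ) * τ + (B.1 1 1 : ℂ))
      = ((A * B).1 1 0 : ℂ) * τ + ((A * B).1 1 1 : ℂ) := by
    rw [mul_entry A B 1 0, mul_entry A B 1 1]
    show ((A.1 1 0 : ℂ) * (((B.1 0 0 : ℂ) * τ + (B.1 0 1 : ℂ)) / ((B.1 1 0 : ℂ) * τ + (B.1 1 1 : ℂ))) + (A.1 1 1 : ℂ)) * _ = _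
    rw [add_mul, mul_assoc, div_mul_cancel₀ _ hdB]
    ring
  have hdAB : ((A * B).1 1 0 : ℂ) * τ + ((A * B).1 1 1 : ℂ) ≠ 0 := denom_ne_zero (A * B) hτ
  have hdetB := det_coe_complex B
  unfold jFac
  rw [mul_mul_mul_comm, ← Complex.exp_add, hkey]
  congr 2
  rw [mul_entry A B 1 0, mul_entry A B 1 1]
  rw [mul_entry A B 1 0, mul_entry A B 1 1] at hdAB
  simp only [sl2Act]
  exact exp_cocycle _ _ _ _ _ _ t τ hdB hdAB hdetB
def jProp (A : Matrix.SpecialLinearGroup (Fin 2) ℤ) : Prop :=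
  ∀ t τ : ℂ, 0 < τ.im →
    jThetaDeriv (sl2Act A (t, τ)).2 / jTheta (sl2Act A (t, τ)).1 (sl2Act A (t, τ)).2
      = jFac A t τ * (jThetaDeriv τ / jTheta t τ)

lemma jProp_one : jProp 1 := by
  intro t τ hτ
  rw [sl2Act_one, jFac_one, one_mul]

lemma jProp_mul {A B : Matrix.SpecialLinearGroup (Fin 2) ℤ}
    (hA : jProp A) (hB : jProp B) : jProp (A * B) := by
  intro t τ hτ
  have hτ' := im_act_pos B t τ hτ
  have h1 := hA (sl2Act B (t, τ)).1 (sl2Act B (t, τ)).2 hτ'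
  rw [Prod.mk.eta] at h1
  rw [sl2Act_mul A B t τ hτ, jFac_mul A B t τ hτ, h1, hB t τ hτ, mul_assoc]

lemma jProp_inv {A : Matrix.SpecialLinearGroup (Fin 2) ℤ} (hA : jProp A) : jProp A⁻¹ := by
  intro t τ hτ
  have hτ' := im_act_pos A⁻¹ t τ hτ
  have h1 := hA (sl2Act A⁻¹ (t, τ)).1 (sl2Act A⁻¹ (t, τ)).2 hτ'
  rw [Prod.mk.eta, ← sl2Act_mul A A⁻¹ t τ hτ, mul_inv_cancel, sl2Act_one] at h1
  have h2 : jFac A (sl2Act A⁻¹ (t, τ)).1 (sl2Act A⁻¹ (t, τ)).2 * jFac A⁻¹ t τ = 1 := by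
    rw [← jFac_mul A A⁻¹ t τ hτ, mul_inv_cancel, jFac_one]
  have hJ := jFac_ne_zero A (sl2Act A⁻¹ (t, τ)).1 (sl2Act A⁻¹ (t, τ)).2 hτ'
  have h3 : jFac A⁻¹ t τ = (jFac A (sl2Act A⁻¹ (t, τ)).1 (sl2Act A⁻¹ (t, τ)).2)⁻¹ :=
    eq_inv_of_mul_eq_one_right h2
  rw [h3, h1, inv_mul_cancel_left₀ hJ]

lemma jProp_all (hS : jProp ModularGroup.S) (hT : jProp ModularGroup.T)
    (A : Matrix.SpecialLinearGroup (Fin 2) ℤ) : jProp A := by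
  let H : Subgroup (Matrix.SpecialLinearGroup (Fin 2) ℤ) :=
    { carrier := setOf jProp
      one_mem' := jProp_one
      mul_mem' := fun ha hb => jProp_mul ha hb
      inv_mem' := fun ha => jProp_inv ha }
  have hSH : ModularGroup.S ∈ H := hS
  have hTH : ModularGroup.T ∈ H := hT
  suffices h : ∀ n (A : Matrix.SpecialLinearGroup (Fin 2) ℤ), (A.1 1 0).natAbs = n → A ∈ H from
    h _ A rfl
  intro n
  induction n using Nat.strong_induction_on with
  | _ n ih =>
    intro A hA
    by_cases hc : A.1 1 0 = 0
    · have hdet := A.2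
      rw [Matrix.det_fin_two, hc] at hdet
      simp only [mul_zero, sub_zero] at hdet
      rcases Int.eq_one_or_neg_one_of_mul_eq_one' hdet with ⟨ha, hd⟩ | ⟨ha, hd⟩
      · have hAT : A = ModularGroup.T ^ (A.1 0 1) := by
          ext i j
          fin_cases i <;> fin_cases j <;>
            simp [ModularGroup.coe_T_zpow, ha, hd, hc]
        rw [hAT]; exact zpow_mem hTH _
      · have hAT : A = ModularGroup.S * ModularGroup.S * ModularGroup.T ^ (-A.1 0 1) := by
          ext i j
          fin_cases i <;> fin_cases j <;>
            simp [Matrix.SpecialLinearGroup.coe_mul, ModularGroup.coe_S,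
              ModularGroup.coe_T_zpow, Matrix.mul_apply, Fin.sum_univ_two, ha, hd, hc]
        rw [hAT]; exact mul_mem (mul_mem hSH hSH) (zpow_mem hTH _)
    · set q := A.1 0 0 / A.1 1 0 with hq
      have hB : ((ModularGroup.S * (ModularGroup.T ^ (-q) * A)).1 1 0) = A.1 0 0 % A.1 1 0 := by
        simp [Matrix.SpecialLinearGroup.coe_mul, ModularGroup.coe_S, ModularGroup.coe_T_zpow,
          Matrix.mul_apply, Fin.sum_univ_two, Matrix.vecMul, Matrix.vecHead, Matrix.vecTail,
          dotProduct]
        rw [hq, Int.emod_def]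
        ring
      have hlt : (A.1 0 0 % A.1 1 0).natAbs < n := by
        have h1 : 0 ≤ A.1 0 0 % A.1 1 0 := Int.emod_nonneg _ hc
        have h2 : A.1 0 0 % A.1 1 0 < ((A.1 1 0).natAbs : ℤ) := by
          exact Int.emod_lt _ hc
        rw [← hA]; omega
      have hmem : ModularGroup.S * (ModularGroup.T ^ (-q) * A) ∈ H :=
        ih _ hlt _ (by rw [hB])
      have hrw : A = ModularGroup.T ^ q
          * (ModularGroup.S⁻¹ * (ModularGroup.S * (ModularGroup.T ^ (-q) * A))) := by
        group
      rw [hrw]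
      exact mul_mem (zpow_mem hTH q) (mul_mem (inv_mem hSH) hmem)
lemma jProp_S
    (hS : ∀ t τ : ℂ, 0 < τ.im →
      jTheta (t / τ) (-1 / τ)
        = 1 / I * (τ / I) ^ ((1 : ℂ) / 2) * exp (Real.pi * I * t ^ 2 / τ) * jTheta t τ)
    (hS' : ∀ τ : ℂ, 0 < τ.im →
      jThetaDeriv (-1 / τ) = 1 / I * (τ / I) ^ ((1 : ℂ) / 2) * τ * jThetaDeriv τ) :
    jProp ModularGroup.S := by
  intro t τ hτ
  have hτ0 : τ ≠ 0 := by intro h0; rw [h0] at hτ; simp at hτ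
  have hact : sl2Act ModularGroup.S (t, τ) = (t / τ, -1 / τ) := by
    simp [sl2Act, ModularGroup.coe_S]
  have hfac : jFac ModularGroup.S t τ = τ * exp (-(Real.pi * I) * t ^ 2 / τ) := by
    simp [jFac, ModularGroup.coe_S]
  have hq : 1 / Complex.I * (τ / Complex.I) ^ ((1 : ℂ) / 2) ≠ 0 := by
    apply mul_ne_zero
    · simp [Complex.I_ne_zero]
    · rw [Ne, Complex.cpow_eq_zero_iff]
      rintro ⟨h1, -⟩
      rw [div_eq_zero_iff] at h1
      rcases h1 with h1 | h1
      · exact hτ0 h1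
      · exact Complex.I_ne_zero h1
  rw [hact, hfac]
  show jThetaDeriv (-1 / τ) / jTheta (t / τ) (-1 / τ) = _
  rw [hS' τ hτ, hS t τ hτ, mul_div_mul_comm, mul_div_mul_left _ _ hq,
    div_eq_mul_inv, ← Complex.exp_neg]
  ring_nf

lemma jProp_T
    (hT : ∀ t τ : ℂ, 0 < τ.im →
      jTheta t (τ + 1) = exp (Real.pi * I / 4) * jTheta t τ)
    (hT' : ∀ τ : ℂ, 0 < τ.im →
      jThetaDeriv (τ + 1) = exp (Real.pi * I / 4) * jThetaDeriv τ) :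
    jProp ModularGroup.T := by
  intro t τ hτ
  have hact : sl2Act ModularGroup.T (t, τ) = (t, τ + 1) := by
    simp [sl2Act, ModularGroup.coe_T]
  have hfac : jFac ModularGroup.T t τ = 1 := by
    simp [jFac, ModularGroup.coe_T]
  rw [hact, hfac, one_mul]
  show jThetaDeriv (τ + 1) / jTheta t (τ + 1) = _
  rw [hT' τ hτ, hT t τ hτ, mul_div_mul_left _ _ (Complex.exp_ne_zero _)]

/-- Given the modular transformation laws for `θ` and for `θ'(0,·)` under the generators
`S` and `T` of `SL₂(ℤ)`, for any `A = [[a,b],[c,d]] ∈ SL₂(ℤ)` one has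
`θ'(A(0,τ))/θ(A(t,τ)) = (cτ+d) e^{-πict²/(cτ+d)} θ'(0,τ)/θ(t,τ)`. -/
theorem jTheta_deriv_ratio_modular
    (hS : ∀ t τ : ℂ, 0 < τ.im →
      jTheta (t / τ) (-1 / τ)
        = 1 / I * (τ / I) ^ ((1 : ℂ) / 2) * exp (Real.pi * I * t ^ 2 / τ) * jTheta t τ)
    (hT : ∀ t τ : ℂ, 0 < τ.im →
      jTheta t (τ + 1) = exp (Real.pi * I / 4) * jTheta t τ)
    (hS' : ∀ τ : ℂ, 0 < τ.im →
      jThetaDeriv (-1 / τ) = 1 / I * (τ / I) ^ ((1 : ℂ) / 2) * τ * jThetaDeriv τ)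
    (hT' : ∀ τ : ℂ, 0 < τ.im →
      jThetaDeriv (τ + 1) = exp (Real.pi * I / 4) * jThetaDeriv τ)
    (A : Matrix.SpecialLinearGroup (Fin 2) ℤ) (t τ : ℂ) (hτ : 0 < τ.im)
    (h : jTheta t τ ≠ 0)
    (h' : jTheta (sl2Act A (t, τ)).1 (sl2Act A (t, τ)).2 ≠ 0) :
    jThetaDeriv (sl2Act A (t, τ)).2 / jTheta (sl2Act A (t, τ)).1 (sl2Act A (t, τ)).2
      = ((A.1 1 0 : ℂ) * τ + (A.1 1 1 : ℂ))
          * exp (-(Real.pi * I) * (A.1 1 0 : ℂ) * t ^ 2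
              / ((A.1 1 0 : ℂ) * τ + (A.1 1 1 : ℂ)))
          * (jThetaDeriv τ / jTheta t τ) := by
  rw [jProp_all (jProp_S hS hS') (jProp_T hT hT') A t τ hτ]
  rfl
end

section
/- Suppose F(t,τ) is a meromorphic function on ℂ × H such that for every A = [[a,b],[c,d]] ∈ SL₂(ℤ), the function F^A(t,τ) := (cτ+d)^{-l} e^{-πicnt²/(cτ+d)} F(t/(cτ+d), (aτ+b)/(cτ+d)) is holomorphic in (t,τ) for (t,τ) ∈ ℝ × H, and suppose the possible polar divisors of F in ℂ × H are all of the form t = (k/j)(cτ+d) with k, c, d, j integers, (c,d) = 1. Then F(t,τ) is holomorphic on ℝ × H and has no poles at all on lines t = (k/j)(cτ+d): indeed, for any such candidate polar divisor, choosing integers a, b with ad - bc = 1 and applying A = [[d,-b],[-c,a]] transforms the divisor t = (k/j)(cτ+d) into the divisor t = k/j in the new coordinates, contradicting holomorphicity of F^A on ℝ × H. -/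
open Complex

/-- The twisted pullback `F^A(t,τ) = (cτ+d)^{-l} e^{-πicnt²/(cτ+d)} F(A(t,τ))`. -/
noncomputable def twistedPullback (l : ℕ) (n : ℤ) (F : ℂ × ℂ → ℂ)
    (A : Matrix.SpecialLinearGroup (Fin 2) ℤ) (p : ℂ × ℂ) : ℂ :=
  ((A.1 1 0 : ℂ) * p.2 + (A.1 1 1 : ℂ)) ^ (-(l : ℤ)) *
    exp (-(Real.pi * I) * (A.1 1 0 : ℂ) * (n : ℂ) * p.1 ^ 2
        / ((A.1 1 0 : ℂ) * p.2 + (A.1 1 1 : ℂ))) *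
    F (sl2Act A p)

private lemma denomNeZero {c d : ℤ} (h : ¬(c = 0 ∧ d = 0)) {z : ℂ} (hz : 0 < z.im) :
    (c : ℂ) * z + (d : ℂ) ≠ 0 := by
  intro h0
  have him : (c : ℝ) * z.im = 0 := by
    have := congrArg Complex.im h0
    simpa using this
  have hc : (c : ℝ) = 0 := by
    rcases mul_eq_zero.mp him with h1 | h1
    · exact h1
    · exact absurd h1 (ne_of_gt hz)
  have hc' : c = 0 := by exact_mod_cast hc
  subst hc'
  have hd : (d : ℂ) = 0 := by simpa using h0
  exact h ⟨rfl, by exact_mod_cast hd⟩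

private lemma moebius_im_pos {a b c d : ℤ} (hdet : a * d - b * c = 1) {z : ℂ}
    (hz : 0 < z.im) : 0 < (((a : ℂ) * z + (b : ℂ)) / ((c : ℂ) * z + (d : ℂ))).im := by
  have hnb : ¬(c = 0 ∧ d = 0) := by
    rintro ⟨rfl, rfl⟩; simp at hdet
  have hne : (c : ℂ) * z + (d : ℂ) ≠ 0 := denomNeZero hnb hz
  have hsq : 0 < Complex.normSq ((c : ℂ) * z + (d : ℂ)) := Complex.normSq_pos.mpr hne
  rw [Complex.div_im, div_sub_div_same, lt_div_iff₀ hsq]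
  have hd : (a : ℝ) * d - (b : ℝ) * c = 1 := by exact_mod_cast hdet
  simp only [Complex.add_im, Complex.add_re, Complex.mul_im, Complex.mul_re,
    Complex.intCast_re, Complex.intCast_im]
  nlinarith [hz, hd]

private lemma sl2Act_mk (a b c d : ℤ) (h : Matrix.det !![a, b; c, d] = 1) :
    sl2Act ⟨!![a, b; c, d], h⟩ = fun p : ℂ × ℂ =>
      (p.1 / ((c : ℂ) * p.2 + (d : ℂ)),
        ((a : ℂ) * p.2 + (b : ℂ)) / ((c : ℂ) * p.2 + (d : ℂ))) := by
  funext p; simp [sl2Act]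

private lemma twistedPullback_mk (l : ℕ) (n : ℤ) (F : ℂ × ℂ → ℂ) (a b c d : ℤ)
    (h : Matrix.det !![a, b; c, d] = 1) :
    twistedPullback l n F ⟨!![a, b; c, d], h⟩ = fun p : ℂ × ℂ =>
      ((c : ℂ) * p.2 + (d : ℂ)) ^ (-(l : ℤ)) *
        exp (-(Real.pi * I) * (c : ℂ) * (n : ℂ) * p.1 ^ 2 / ((c : ℂ) * p.2 + (d : ℂ))) *
        F (p.1 / ((c : ℂ) * p.2 + (d : ℂ)),
          ((a : ℂ) * p.2 + (b : ℂ)) / ((c : ℂ) * p.2 + (d : ℂ))) := by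
  funext p; simp [twistedPullback, sl2Act]

/-- Rigidity lemma: if `F` is a meromorphic function on `ℂ × H` such that for every
`A ∈ SL₂(ℤ)` the twisted pullback `F^A` is holomorphic at all points of `ℝ × H`, and the
only possible singular points of `F` lie on divisors `t = (k/j)(cτ+d)` with `k,j,c,d`
integers, `j ≠ 0`, `(c,d) = 1`, then `F` is holomorphic on `ℝ × H` and in fact has no
singularities at all on `ℂ × H`. -/
theorem rigidity_no_poles (l : ℕ) (n : ℤ) (F : ℂ × ℂ → ℂ)
    (hhol : ∀ A : Matrix.SpecialLinearGroup (Fin 2) ℤ, ∀ (t : ℝ) (τ : ℂ), 0 < τ.im →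
      AnalyticAt ℂ (twistedPullback l n F A) ((t : ℂ), τ))
    (hpolar : ∀ p : ℂ × ℂ, 0 < p.2.im → ¬ AnalyticAt ℂ F p →
      ∃ k j c d : ℤ, j ≠ 0 ∧ IsCoprime c d ∧
        p.1 = ((k : ℂ) / (j : ℂ)) * ((c : ℂ) * p.2 + (d : ℂ))) :
    (∀ (t : ℝ) (τ : ℂ), 0 < τ.im → AnalyticAt ℂ F ((t : ℂ), τ)) ∧
    (∀ p : ℂ × ℂ, 0 < p.2.im → AnalyticAt ℂ F p) := by
  have main : ∀ p : ℂ × ℂ, 0 < p.2.im → AnalyticAt ℂ F p := by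
    intro p hp
    by_contra hF
    obtain ⟨k, j, c, d, hj, hcd, hp1⟩ := hpolar p hp hF
    obtain ⟨x, y, hxy⟩ := hcd
    have hnb : ¬(c = 0 ∧ d = 0) := by rintro ⟨rfl, rfl⟩; simp at hxy
    have hdetM : Matrix.det !![y, -x; c, d] = 1 := by
      rw [Matrix.det_fin_two_of]; linarith
    have hdetB : Matrix.det !![d, x; -c, y] = 1 := by
      rw [Matrix.det_fin_two_of]; linarith
    set M : Matrix.SpecialLinearGroup (Fin 2) ℤ := ⟨!![y, -x; c, d], hdetM⟩ with hMdef
    set B : Matrix.SpecialLinearGroup (Fin 2) ℤ := ⟨!![d, x; -c, y], hdetB⟩ with hBdef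
    have hsl2M := sl2Act_mk y (-x) c d hdetM
    have hTPB := twistedPullback_mk l n F d x (-c) y hdetB
    have hdetC : (x : ℂ) * c + (y : ℂ) * d = 1 := by exact_mod_cast hxy
    -- denominators
    have hD : ∀ z : ℂ, 0 < z.im → (c : ℂ) * z + (d : ℂ) ≠ 0 := fun z hz => denomNeZero hnb hz
    have hE : ∀ z : ℂ, 0 < z.im →
        ((-c : ℤ) : ℂ) * (((y : ℂ) * z + ((-x : ℤ) : ℂ)) / ((c : ℂ) * z + (d : ℂ))) + (y : ℂ)
          = 1 / ((c : ℂ) * z + (d : ℂ)) := by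
      intro z hz
      have hDz := hD z hz
      push_cast
      field_simp
      ring_nf
      linear_combination hdetC
    -- the image point
    have hWim : 0 < (((y : ℂ) * p.2 + ((-x : ℤ) : ℂ)) / ((c : ℂ) * p.2 + (d : ℂ))).im :=
      moebius_im_pos (by linarith : y * d - (-x) * c = 1) hp
    have hq : sl2Act M p
        = ((k : ℂ) / (j : ℂ), ((y : ℂ) * p.2 + ((-x : ℤ) : ℂ)) / ((c : ℂ) * p.2 + (d : ℂ))) := by
      rw [hsl2M]
      refine Prod.ext ?_ rfl
      show p.1 / ((c : ℂ) * p.2 + (d : ℂ)) = _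
      rw [hp1, mul_div_assoc, div_self (hD p.2 hp), mul_one]
    -- analyticity of the untwisting function at the image point
    set W : ℂ := ((y : ℂ) * p.2 + ((-x : ℤ) : ℂ)) / ((c : ℂ) * p.2 + (d : ℂ)) with hWdef
    have hEne : ((-c : ℤ) : ℂ) * W + (y : ℂ) ≠ 0 := by
      rw [hWdef, hE p.2 hp]
      exact one_div_ne_zero (hD p.2 hp)
    have hEa : AnalyticAt ℂ (fun q : ℂ × ℂ => ((-c : ℤ) : ℂ) * q.2 + (y : ℂ))
        (((k : ℂ) / (j : ℂ), W) : ℂ × ℂ) :=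
      (analyticAt_const.mul analyticAt_snd).add analyticAt_const
    have htp : AnalyticAt ℂ (twistedPullback l n F B) (((k : ℂ) / (j : ℂ), W) : ℂ × ℂ) := by
      have h1 := hhol B ((k : ℝ) / (j : ℝ)) W hWim
      have hcast : ((((k : ℝ) / (j : ℝ)) : ℝ) : ℂ) = (k : ℂ) / (j : ℂ) := by push_cast; rfl
      rwa [hcast] at h1
    have hg : AnalyticAt ℂ (fun q : ℂ × ℂ =>
        (((-c : ℤ) : ℂ) * q.2 + (y : ℂ)) ^ l *
          exp ((Real.pi : ℂ) * I * ((-c : ℤ) : ℂ) * (n : ℂ) * q.1 ^ 2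
            / (((-c : ℤ) : ℂ) * q.2 + (y : ℂ))) *
          twistedPullback l n F B q) (((k : ℂ) / (j : ℂ), W) : ℂ × ℂ) := by
      refine ((hEa.pow l).mul ?_).mul htp
      exact ((analyticAt_const.mul (analyticAt_fst.pow 2)).div hEa hEne).cexp
    -- analyticity of sl2Act M at p
    have hMa : AnalyticAt ℂ (sl2Act M) p := by
      rw [hsl2M]
      exact (analyticAt_fst.div ((analyticAt_const.mul analyticAt_snd).add analyticAt_const)
          (hD p.2 hp)).prod
        (((analyticAt_const.mul analyticAt_snd).add analyticAt_const).div
          ((analyticAt_const.mul analyticAt_snd).add analyticAt_const) (hD p.2 hp))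
    rw [← hq] at hg
    have hcomp := hg.comp hMa
    refine hF (hcomp.congr ?_)
    have hU : IsOpen {p' : ℂ × ℂ | 0 < p'.2.im} :=
      isOpen_lt continuous_const (Complex.continuous_im.comp continuous_snd)
    filter_upwards [hU.mem_nhds hp] with p' hp'
    have hD' : (c : ℂ) * p'.2 + (d : ℂ) ≠ 0 := hD p'.2 hp'
    have hE' := hE p'.2 hp'
    show (((-c : ℤ) : ℂ) * (sl2Act M p').2 + (y : ℂ)) ^ l *
          exp ((Real.pi : ℂ) * I * ((-c : ℤ) : ℂ) * (n : ℂ) * (sl2Act M p').1 ^ 2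
            / (((-c : ℤ) : ℂ) * (sl2Act M p').2 + (y : ℂ))) *
          twistedPullback l n F B (sl2Act M p') = F p'
    rw [hsl2M, hTPB]
    simp only
    rw [hE']
    have ha1 : p'.1 / ((c : ℂ) * p'.2 + (d : ℂ)) / (1 / ((c : ℂ) * p'.2 + (d : ℂ))) = p'.1 := by
      field_simp
    have ha2 : ((d : ℂ) * (((y : ℂ) * p'.2 + ((-x : ℤ) : ℂ)) / ((c : ℂ) * p'.2 + (d : ℂ)))
        + (x : ℂ)) / (1 / ((c : ℂ) * p'.2 + (d : ℂ))) = p'.2 := by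
      push_cast
      field_simp
      rw [mul_add, mul_div_cancel₀ _ (by rwa [mul_comm] at hD')]
      ring_nf
      linear_combination p'.2 * hdetC
    rw [ha1, ha2]
    have hO : (1 : ℂ) / ((c : ℂ) * p'.2 + (d : ℂ)) ≠ 0 := one_div_ne_zero hD'
    have hzp : (1 / ((c : ℂ) * p'.2 + (d : ℂ))) ^ (-(l : ℤ))
        = ((1 / ((c : ℂ) * p'.2 + (d : ℂ))) ^ l)⁻¹ := by
      rw [zpow_neg, zpow_natCast]
    rw [hzp]
    have hexps : exp ((Real.pi : ℂ) * I * ((-c : ℤ) : ℂ) * (n : ℂ)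
          * (p'.1 / ((c : ℂ) * p'.2 + (d : ℂ))) ^ 2 / (1 / ((c : ℂ) * p'.2 + (d : ℂ)))) *
        exp (-((Real.pi : ℂ) * I) * ((-c : ℤ) : ℂ) * (n : ℂ)
          * (p'.1 / ((c : ℂ) * p'.2 + (d : ℂ))) ^ 2 / (1 / ((c : ℂ) * p'.2 + (d : ℂ)))) = 1 := by
      rw [← Complex.exp_add]
      rw [show (Real.pi : ℂ) * I * ((-c : ℤ) : ℂ) * (n : ℂ)
          * (p'.1 / ((c : ℂ) * p'.2 + (d : ℂ))) ^ 2 / (1 / ((c : ℂ) * p'.2 + (d : ℂ)))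
          + -((Real.pi : ℂ) * I) * ((-c : ℤ) : ℂ) * (n : ℂ)
          * (p'.1 / ((c : ℂ) * p'.2 + (d : ℂ))) ^ 2 / (1 / ((c : ℂ) * p'.2 + (d : ℂ))) = 0
        from by ring, Complex.exp_zero]
    have hPne : ((1 : ℂ) / ((c : ℂ) * p'.2 + (d : ℂ))) ^ l ≠ 0 := pow_ne_zero l hO
    have hFeta : F (p'.1, p'.2) = F p' := by rw [Prod.mk.eta]
    calc (1 / ((c : ℂ) * p'.2 + (d : ℂ))) ^ l *
          exp ((Real.pi : ℂ) * I * ((-c : ℤ) : ℂ) * (n : ℂ)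
            * (p'.1 / ((c : ℂ) * p'.2 + (d : ℂ))) ^ 2 / (1 / ((c : ℂ) * p'.2 + (d : ℂ)))) *
          (((1 / ((c : ℂ) * p'.2 + (d : ℂ))) ^ l)⁻¹ *
            exp (-((Real.pi : ℂ) * I) * ((-c : ℤ) : ℂ) * (n : ℂ)
              * (p'.1 / ((c : ℂ) * p'.2 + (d : ℂ))) ^ 2 / (1 / ((c : ℂ) * p'.2 + (d : ℂ)))) *
            F (p'.1, p'.2))
        = ((1 / ((c : ℂ) * p'.2 + (d : ℂ))) ^ l * ((1 / ((c : ℂ) * p'.2 + (d : ℂ))) ^ l)⁻¹) *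
          (exp ((Real.pi : ℂ) * I * ((-c : ℤ) : ℂ) * (n : ℂ)
            * (p'.1 / ((c : ℂ) * p'.2 + (d : ℂ))) ^ 2 / (1 / ((c : ℂ) * p'.2 + (d : ℂ)))) *
           exp (-((Real.pi : ℂ) * I) * ((-c : ℤ) : ℂ) * (n : ℂ)
            * (p'.1 / ((c : ℂ) * p'.2 + (d : ℂ))) ^ 2 / (1 / ((c : ℂ) * p'.2 + (d : ℂ))))) *
          F (p'.1, p'.2) := by ring
      _ = F p' := by rw [mul_inv_cancel₀ hPne, hexps, one_mul, one_mul, hFeta]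
  exact ⟨fun t τ hτ => main ((t : ℂ), τ) hτ, main⟩
end
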